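/- Let v be the longest element of W₁ and let t ∈ T = {w ∈ W | w(B₁) = B₁}. Set Q⁺ = {α ∈ Q(t) | (ρ′, α) > 0} and Q⁻ = {α ∈ Q(t) | (ρ′, α) < 0}. Then the map α ↦ vα is a permutation of Q(t) which interchanges Q⁺ and Q⁻. -/

import Mathlib

open scoped Classical RealInnerProductSpace

section MyAux

variable {V : Type*} [NormedAddCommGroup V] [InnerProductSpace ℝ V]

lemma myaux_indep {B : Finset V}
    (hBindep : LinearIndependent ℝ (Subtype.val : {x : V // x ∈ B} → V))
    (f : V → ℝ) (hf : ∑ b ∈ B, f b • b = 0) : ∀ b ∈ B, f b = 0 := by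
  classical
  intro b hb
  have h := Fintype.linearIndependent_iff.mp hBindep (fun i => f i.1)
  have h0 : ∑ i : {x : V // x ∈ B}, f i.1 • (i.1 : V) = 0 := by
    rw [Finset.sum_coe_sort B (fun b => f b • b)]; exact hf
  exact h h0 ⟨b, hb⟩

lemma myaux_coeff_ext {B : Finset V}
    (hBindep : LinearIndependent ℝ (Subtype.val : {x : V // x ∈ B} → V))
    (f g : V → ℝ) (hfg : ∑ b ∈ B, f b • b = ∑ b ∈ B, g b • b) :
    ∀ b ∈ B, f b = g b := by
  intro b hb
  have := myaux_indep hBindep (fun b => f b - g b) (by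
    simp only [sub_smul, Finset.sum_sub_distrib, hfg, sub_self]) b hb
  simpa [sub_eq_zero] using this

lemma myaux_span_rep {B1 B : Finset V} (hB1B : B1 ⊆ B) {x : V}
    (hx : x ∈ Submodule.span ℝ (B1 : Set V)) :
    ∃ f : V → ℝ, (∀ b, b ∉ B1 → f b = 0) ∧ ∑ b ∈ B, f b • b = x := by
  classical
  obtain ⟨f, -, hf⟩ := Submodule.mem_span_finset.mp hx
  refine ⟨fun b => if b ∈ B1 then f b else 0, fun b hb => by simp [hb], ?_⟩
  rw [← Finset.sum_subset hB1B (by intro b _ hb; simp [hb])]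
  simpa using hf

lemma myaux_rep_span {B1 B : Finset V} (hB1B : B1 ⊆ B) (f : V → ℝ)
    (hf0 : ∀ b ∈ B, b ∉ B1 → f b = 0) :
    ∑ b ∈ B, f b • b ∈ Submodule.span ℝ (B1 : Set V) := by
  rw [← Finset.sum_subset hB1B (by intro b hb hb1; rw [hf0 b hb hb1, zero_smul])]
  exact Submodule.sum_mem _ fun b hb => Submodule.smul_mem _ _ (Submodule.subset_span hb)

lemma myaux_pos {R Rpos B : Finset V}
    (hR0 : ∀ α ∈ R, α ≠ 0)
    (hRsplit : ∀ α ∈ R, (α ∈ Rpos ∨ -α ∈ Rpos) ∧ ¬(α ∈ Rpos ∧ -α ∈ Rpos))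
    (hBindep : LinearIndependent ℝ (Subtype.val : {x : V // x ∈ B} → V))
    (hBgen : ∀ α ∈ Rpos, ∃ c : V → ℕ, α = ∑ b ∈ B, (c b : ℝ) • b)
    {x : V} (hx : x ∈ R) (f : V → ℝ) (hfnn : ∀ b ∈ B, 0 ≤ f b)
    (hsum : ∑ b ∈ B, f b • b = x) : x ∈ Rpos := by
  rcases (hRsplit x hx).1 with h | h
  · exact h
  · exfalso
    obtain ⟨c, hc⟩ := hBgen _ h
    have hzero : ∀ b ∈ B, f b + (c b : ℝ) = 0 := by
      apply myaux_indep hBindep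
      simp only [add_smul, Finset.sum_add_distrib, hsum, ← hc]
      abel
    have hf0 : ∀ b ∈ B, f b = 0 := by
      intro b hb
      have h1 := hfnn b hb
      have h2 : (0:ℝ) ≤ (c b : ℝ) := Nat.cast_nonneg _
      have h3 := hzero b hb
      linarith
    apply hR0 x hx
    rw [← hsum]
    exact Finset.sum_eq_zero fun b hb => by rw [hf0 b hb, zero_smul]

lemma myaux_s_invol (s : V → (V ≃ₗᵢ[ℝ] V))
    {α : V} (hα : α ≠ 0)
    (hsα : ∀ x : V, s α x = x - (2 * ⟪x, α⟫ / ⟪α, α⟫) • α) :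
    s α * s α = 1 := by
  have hαα : ⟪α, α⟫ ≠ 0 := inner_self_ne_zero.mpr hα
  ext x
  have h1 : ((s α * s α) x : V) = s α (s α x) := rfl
  rw [h1, hsα, hsα x, inner_sub_left, real_inner_smul_left]
  have h2 : ⟪x, α⟫ - 2 * ⟪x, α⟫ / ⟪α, α⟫ * ⟪α, α⟫ = -⟪x, α⟫ := by
    rw [div_mul_cancel₀ _ hαα]; ring
  rw [h2]
  have h3 : 2 * -⟪x, α⟫ / ⟪α, α⟫ = -(2 * ⟪x, α⟫ / ⟪α, α⟫) := by ring
  rw [h3, neg_smul, sub_neg_eq_add, sub_add_cancel]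
  rfl

lemma myaux_W_maps {R : Finset V} (s : V → (V ≃ₗᵢ[ℝ] V))
    (hR0 : ∀ α ∈ R, α ≠ 0)
    (hs : ∀ α ∈ R, ∀ x : V, s α x = x - (2 * ⟪x, α⟫ / ⟪α, α⟫) • α)
    (hRs : ∀ α ∈ R, ∀ β ∈ R, s α β ∈ R) :
    ∀ g ∈ Subgroup.closure {g : V ≃ₗᵢ[ℝ] V | ∃ α ∈ R, g = s α},
      ∀ β ∈ R, g β ∈ R ∧ g⁻¹ β ∈ R := by
  intro g hg
  induction hg using Subgroup.closure_induction with
  | mem x hx =>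
    obtain ⟨α, hα, rfl⟩ := hx
    intro β hβ
    have hinv : (s α)⁻¹ = s α :=
      inv_eq_of_mul_eq_one_right (myaux_s_invol s (hR0 α hα) (hs α hα))
    exact ⟨hRs α hα β hβ, by rw [hinv]; exact hRs α hα β hβ⟩
  | one =>
    intro β hβ
    constructor <;> simpa using hβ
  | mul x y hx hy px py =>
    intro β hβ
    constructor
    · show x (y β) ∈ R
      exact (px _ ((py β hβ).1)).1
    · rw [mul_inv_rev]
      show y⁻¹ (x⁻¹ β) ∈ R
      exact (py _ ((px β hβ).2)).2
  | inv x hx px =>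
    intro β hβ
    refine ⟨(px β hβ).2, ?_⟩
    rw [inv_inv]
    exact (px β hβ).1

lemma myaux_W1_diff {R1 B1 : Finset V} (s : V → (V ≃ₗᵢ[ℝ] V))
    (hspan : ∀ α ∈ R1, α ∈ Submodule.span ℝ (B1 : Set V))
    (hs1 : ∀ α ∈ R1, ∀ x : V, s α x = x - (2 * ⟪x, α⟫ / ⟪α, α⟫) • α) :
    ∀ g ∈ Subgroup.closure {g : V ≃ₗᵢ[ℝ] V | ∃ α ∈ R1, g = s α},
      ∀ x : V, g x - x ∈ Submodule.span ℝ (B1 : Set V) := by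
  intro g hg
  induction hg using Subgroup.closure_induction with
  | mem w hw =>
    obtain ⟨α, hα, rfl⟩ := hw
    intro x
    rw [hs1 α hα x]
    have : x - (2 * ⟪x, α⟫ / ⟪α, α⟫) • α - x = -((2 * ⟪x, α⟫ / ⟪α, α⟫) • α) := by
      abel
    rw [this]
    exact Submodule.neg_mem _ (Submodule.smul_mem _ _ (hspan α hα))
  | one => intro x; simpa using Submodule.zero_mem _
  | mul x y hx hy px py =>
    intro z
    have : (x * y) z - z = (x (y z) - y z) + (y z - z) := by
      show x (y z) - z = _
      abel
    rw [this]
    exact Submodule.add_mem _ (px (y z)) (py z)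
  | inv x hx px =>
    intro z
    have h1 : x⁻¹ z - z = -(x (x⁻¹ z) - x⁻¹ z) := by
      have : x (x⁻¹ z) = z := by
        show (x * x⁻¹) z = z
        rw [mul_inv_cancel]
        rfl
      rw [this]; abel
    rw [h1]
    exact Submodule.neg_mem _ (px (x⁻¹ z))

lemma myaux_conj {R1 : Finset V} (s : V → (V ≃ₗᵢ[ℝ] V)) (t : V ≃ₗᵢ[ℝ] V)
    (ht1 : ∀ α ∈ R1, t α ∈ R1)
    (hsconj : ∀ α ∈ R1, t * s α * t⁻¹ = s (t α)) :
    ∀ g ∈ Subgroup.closure {g : V ≃ₗᵢ[ℝ] V | ∃ α ∈ R1, g = s α},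
      t * g * t⁻¹ ∈ Subgroup.closure {g : V ≃ₗᵢ[ℝ] V | ∃ α ∈ R1, g = s α} := by
  intro g hg
  induction hg using Subgroup.closure_induction with
  | mem w hw =>
    obtain ⟨α, hα, rfl⟩ := hw
    rw [hsconj α hα]
    exact Subgroup.subset_closure ⟨t α, ht1 α hα, rfl⟩
  | one => simpa using Subgroup.one_mem _
  | mul x y hx hy px py =>
    have : t * (x * y) * t⁻¹ = (t * x * t⁻¹) * (t * y * t⁻¹) := by group
    rw [this]
    exact Subgroup.mul_mem _ px py
  | inv x hx px =>
    have : t * x⁻¹ * t⁻¹ = (t * x * t⁻¹)⁻¹ := by group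
    rw [this]
    exact Subgroup.inv_mem _ px

end MyAux

/-- Context: `R` is a finite crystallographic root system in a real inner product
space `V`, with Weyl group `W` (generated by the reflections `s α`), positive
system `Rpos`, simple roots `B`; `B1 ⊆ B` and `R1` is the subroot system with
simple roots `B1`, with positive roots `R1 ∩ Rpos` and Weyl group `W1`. -/
theorem stmt_7
    {V : Type*} [NormedAddCommGroup V] [InnerProductSpace ℝ V]
    (R : Finset V)
    (hR0 : ∀ α ∈ R, α ≠ 0)
    (hRcrys : ∀ α ∈ R, ∀ β ∈ R, ∃ n : ℤ, 2 * ⟪β, α⟫ / ⟪α, α⟫ = (n : ℝ))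
    (hRred : ∀ α ∈ R, ∀ t : ℝ, t • α ∈ R → t = 1 ∨ t = -1)
    (s : V → (V ≃ₗᵢ[ℝ] V))
    (hs : ∀ α ∈ R, ∀ x : V, s α x = x - (2 * ⟪x, α⟫ / ⟪α, α⟫) • α)
    (hRs : ∀ α ∈ R, ∀ β ∈ R, s α β ∈ R)
    (W : Subgroup (V ≃ₗᵢ[ℝ] V))
    (hW : W = Subgroup.closure {g | ∃ α ∈ R, g = s α})
    (Rpos : Finset V) (hRposSub : Rpos ⊆ R)
    (hRsplit : ∀ α ∈ R, (α ∈ Rpos ∨ -α ∈ Rpos) ∧ ¬(α ∈ Rpos ∧ -α ∈ Rpos))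
    (B : Finset V) (hBsub : B ⊆ Rpos)
    (hBindep : LinearIndependent ℝ (Subtype.val : {x : V // x ∈ B} → V))
    (hBgen : ∀ α ∈ Rpos, ∃ c : V → ℕ, α = ∑ b ∈ B, (c b : ℝ) • b)
    (B1 : Finset V) (hB1B : B1 ⊆ B)
    (R1 : Finset V)
    (hR1 : ∀ α, α ∈ R1 ↔ α ∈ R ∧ (α : V) ∈ Submodule.span ℝ (B1 : Set V))
    (W1 : Subgroup (V ≃ₗᵢ[ℝ] V))
    (hW1 : W1 = Subgroup.closure {g | ∃ α ∈ R1, g = s α})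
    (v : V ≃ₗᵢ[ℝ] V) (hvW1 : v ∈ W1)
    (hv : Finset.image (fun α => v α) (R1 ∩ Rpos)
      = Finset.image (fun α => -α) (R1 ∩ Rpos))
    (t : V ≃ₗᵢ[ℝ] V) (htW : t ∈ W)
    (ht : Finset.image (fun α => t α) B1 = B1) :
    Finset.image (fun α => v α) (Rpos.filter (fun β => -(t β) ∈ Rpos))
        = Rpos.filter (fun β => -(t β) ∈ Rpos) ∧
    Finset.image (fun α => v α)
        ((Rpos.filter (fun β => -(t β) ∈ Rpos)).filter
          (fun α => 0 < ⟪(2⁻¹ : ℝ) • ∑ γ ∈ R1 ∩ Rpos, γ, α⟫))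
      = (Rpos.filter (fun β => -(t β) ∈ Rpos)).filter
          (fun α => ⟪(2⁻¹ : ℝ) • ∑ γ ∈ R1 ∩ Rpos, γ, α⟫ < 0) ∧
    Finset.image (fun α => v α)
        ((Rpos.filter (fun β => -(t β) ∈ Rpos)).filter
          (fun α => ⟪(2⁻¹ : ℝ) • ∑ γ ∈ R1 ∩ Rpos, γ, α⟫ < 0))
      = (Rpos.filter (fun β => -(t β) ∈ Rpos)).filter
          (fun α => 0 < ⟪(2⁻¹ : ℝ) • ∑ γ ∈ R1 ∩ Rpos, γ, α⟫) := by
  classical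
  have hR1R : ∀ α ∈ R1, α ∈ R := fun α hα => ((hR1 α).1 hα).1
  have hR1span : ∀ α ∈ R1, α ∈ Submodule.span ℝ (B1 : Set V) :=
    fun α hα => ((hR1 α).1 hα).2
  set M := Submodule.span ℝ (B1 : Set V) with hM
  -- elements of W map R into R
  have hWR : ∀ g ∈ W, ∀ β ∈ R, g β ∈ R := by
    rw [hW]
    intro g hg β hβ
    exact (myaux_W_maps s hR0 hs hRs g hg β hβ).1
  -- W1 ≤ W
  have hW1W : ∀ g ∈ W1, g ∈ W := by
    rw [hW1, hW]
    intro g hg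
    exact Subgroup.closure_mono
      (fun w hw => by obtain ⟨α, hα, rfl⟩ := hw; exact ⟨α, hR1R α hα, rfl⟩) hg
  -- elements of W1 move vectors by elements of M
  have hdiff : ∀ g ∈ W1, ∀ x : V, g x - x ∈ M := by
    rw [hW1]
    intro g hg x
    exact myaux_W1_diff s hR1span (fun α hα => hs α (hR1R α hα)) g hg x
  -- t preserves M
  have htspan : ∀ x : V, x ∈ M ↔ t x ∈ M := by
    have himg : (⇑t) '' (B1 : Set V) = (B1 : Set V) := by
      rw [← Finset.coe_image, ht]
    have hmap : Submodule.map (t.toLinearEquiv : V →ₗ[ℝ] V) M = M := by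
      rw [hM, Submodule.map_span]
      refine congrArg (Submodule.span ℝ) ?_
      simpa using himg
    intro x
    constructor
    · intro hx
      have : t.toLinearEquiv x ∈ Submodule.map (t.toLinearEquiv : V →ₗ[ℝ] V) M :=
        Submodule.mem_map_of_mem hx
      rw [hmap] at this
      exact this
    · intro hx
      rw [← hmap] at hx
      obtain ⟨y, hy, hyx⟩ := hx
      have : y = x := t.injective hyx
      rwa [← this]
  -- t maps positive roots in M to positive roots in M
  have htpos : ∀ β ∈ Rpos, β ∈ M → t β ∈ Rpos ∧ t β ∈ M := by
    intro β hβ hβM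
    obtain ⟨c, hc⟩ := hBgen β hβ
    obtain ⟨f, hf0, hfsum⟩ := myaux_span_rep hB1B hβM
    have hcf : ∀ b ∈ B, (c b : ℝ) = f b :=
      myaux_coeff_ext hBindep _ f (by rw [← hc, hfsum])
    have hczero : ∀ b ∈ B, b ∉ B1 → (c b : ℝ) = 0 := by
      intro b hb hb1; rw [hcf b hb, hf0 b hb1]
    have hβ1 : β = ∑ b ∈ B1, (c b : ℝ) • b := by
      rw [hc]
      exact (Finset.sum_subset hB1B (fun b hb hb1 => by
        rw [hczero b hb hb1, zero_smul])).symm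
    have htβ : t β = ∑ b ∈ B1, (c b : ℝ) • t b := by
      rw [hβ1, map_sum]
      exact Finset.sum_congr rfl fun b _ => by rw [map_smul]
    have htB1 : ∀ b ∈ B1, t b ∈ B1 := by
      intro b hb
      rw [← ht]
      exact Finset.mem_image_of_mem _ hb
    have htβM : t β ∈ M := by
      rw [htβ]
      exact Submodule.sum_mem _ fun b hb =>
        Submodule.smul_mem _ _ (Submodule.subset_span (htB1 b hb))
    refine ⟨?_, htβM⟩
    have htβR : t β ∈ R := hWR t htW β (hRposSub hβ)
    set F : V → ℝ := fun b => if b ∈ B1 then (c (t.symm b) : ℝ) else 0 with hF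
    have hreindex : ∑ b ∈ B1, (c b : ℝ) • t b = ∑ b ∈ B1, F b • b := by
      have e1 : ∑ b ∈ B1, F b • b = ∑ b ∈ Finset.image (fun α => t α) B1, F b • b := by
        rw [ht]
      rw [e1, Finset.sum_image (fun a _ b _ h => t.injective h)]
      apply Finset.sum_congr rfl
      intro b hb
      have : F (t b) = (c b : ℝ) := by
        rw [hF]; simp only [if_pos (htB1 b hb), t.symm_apply_apply]
      rw [this]
    apply myaux_pos hR0 hRsplit hBindep hBgen htβR F
    · intro b _; rw [hF]; dsimp only; split <;> positivity
    · have hF0 : ∀ b ∈ B, b ∉ B1 → F b • b = 0 := by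
        intro b _ hb1; rw [hF]; dsimp only; rw [if_neg hb1, zero_smul]
      rw [← Finset.sum_subset hB1B hF0, ← hreindex, htβ]
  -- elements of W1 map positive roots outside M to positive roots outside M
  have hW1pos : ∀ g ∈ W1, ∀ β ∈ Rpos, β ∉ M → g β ∈ Rpos ∧ g β ∉ M := by
    intro g hg β hβ hβM
    have hgβR : g β ∈ R := hWR g (hW1W g hg) β (hRposSub hβ)
    have hd : g β - β ∈ M := hdiff g hg β
    have hgβM : g β ∉ M := by
      intro hgM
      apply hβM
      have : β = g β - (g β - β) := by abel
      rw [this]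
      exact Submodule.sub_mem _ hgM hd
    refine ⟨?_, hgβM⟩
    rcases (hRsplit _ hgβR).1 with h | h
    · exact h
    · exfalso
      obtain ⟨c', hc'⟩ := hBgen _ h
      obtain ⟨c, hc⟩ := hBgen β hβ
      obtain ⟨f, hf0, hfsum⟩ := myaux_span_rep hB1B hd
      have hzero : ∀ b ∈ B, f b + (c b : ℝ) + (c' b : ℝ) = 0 := by
        apply myaux_indep hBindep
        simp only [add_smul, Finset.sum_add_distrib, hfsum, ← hc, ← hc']
        abel
      apply hβM
      rw [hc]
      apply myaux_rep_span hB1B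
      intro b hb hb1
      have h1 := hzero b hb
      rw [hf0 b hb1] at h1
      have h2 : (0:ℝ) ≤ (c b : ℝ) := Nat.cast_nonneg _
      have h3 : (0:ℝ) ≤ (c' b : ℝ) := Nat.cast_nonneg _
      have : (c b : ℝ) = 0 := by linarith
      exact this
  -- the inversion set of t
  set Q := Rpos.filter (fun β => -(t β) ∈ Rpos) with hQdef
  have hQmem : ∀ β, β ∈ Q ↔ β ∈ Rpos ∧ -(t β) ∈ Rpos := by
    intro β; rw [hQdef, Finset.mem_filter]
  have hQnotM : ∀ β ∈ Q, β ∉ M := by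
    intro β hβ hβM
    obtain ⟨hβpos, hβneg⟩ := (hQmem β).1 hβ
    have := (htpos β hβpos hβM).1
    exact (hRsplit (t β) (hWR t htW β (hRposSub hβpos))).2 ⟨this, hβneg⟩
  -- conjugation by t preserves W1
  have ht1 : ∀ α ∈ R1, t α ∈ R1 := by
    intro α hα
    exact (hR1 (t α)).2 ⟨hWR t htW α (hR1R α hα), (htspan α).1 (hR1span α hα)⟩
  have hsconj : ∀ α ∈ R1, t * s α * t⁻¹ = s (t α) := by
    intro α hα
    have hαR := hR1R α hα
    have htαR := hWR t htW α hαR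
    ext x
    have h1 : ((t * s α * t⁻¹) x : V) = t (s α (t.symm x)) := rfl
    rw [h1, hs α hαR, hs (t α) htαR, map_sub, map_smul, t.apply_symm_apply]
    have e1 : ⟪t.symm x, α⟫ = ⟪x, t α⟫ := by
      rw [← t.inner_map_map (t.symm x) α, t.apply_symm_apply]
    have e2 : ⟪α, α⟫ = ⟪t α, t α⟫ := (t.inner_map_map α α).symm
    rw [e1, e2]
  have hconj : ∀ g ∈ W1, t * g * t⁻¹ ∈ W1 := by
    rw [hW1]
    intro g hg
    exact myaux_conj s t ht1 hsconj g hg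
  -- v maps Q into Q
  have hQv : ∀ β ∈ Q, v β ∈ Q := by
    intro β hβ
    obtain ⟨hβpos, hβneg⟩ := (hQmem β).1 hβ
    have hβM : β ∉ M := hQnotM β hβ
    obtain ⟨hvβpos, _⟩ := hW1pos v hvW1 β hβpos hβM
    have hu : t * v * t⁻¹ ∈ W1 := hconj v hvW1
    have hγM : -(t β) ∉ M := by
      intro hmem
      apply hβM
      rw [htspan]
      simpa using Submodule.neg_mem _ hmem
    obtain ⟨huγpos, _⟩ := hW1pos _ hu _ hβneg hγM
    have hkey : (t * v * t⁻¹) (-(t β)) = -(t (v β)) := by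
      rw [map_neg]
      congr 1
      show t (v (t.symm (t β))) = t (v β)
      rw [t.symm_apply_apply]
    rw [hkey] at huγpos
    exact (hQmem (v β)).2 ⟨hvβpos, huγpos⟩
  -- v permutes Q
  have himgQ : Finset.image (fun α => v α) Q = Q := by
    apply Finset.eq_of_subset_of_card_le
    · intro x hx
      obtain ⟨α, hα, rfl⟩ := Finset.mem_image.1 hx
      exact hQv α hα
    · rw [Finset.card_image_of_injective _ v.injective]
  -- half-sum of positive roots of R1
  set ρ : V := ∑ γ ∈ R1 ∩ Rpos, γ with hρdef
  have hvρ : v ρ = -ρ := by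
    have h1 : ∑ x ∈ Finset.image (fun α => v α) (R1 ∩ Rpos), x
        = ∑ x ∈ R1 ∩ Rpos, v x :=
      Finset.sum_image (fun a _ b _ h => v.injective h)
    have h2 : ∑ x ∈ Finset.image (fun α => -α) (R1 ∩ Rpos), x
        = ∑ x ∈ R1 ∩ Rpos, -x :=
      Finset.sum_image (fun a _ b _ h => neg_injective h)
    rw [hρdef, map_sum, ← h1, hv, h2, ← Finset.sum_neg_distrib]
  have hsign : ∀ x : V, ⟪(2⁻¹ : ℝ) • ρ, v x⟫ = -⟪(2⁻¹ : ℝ) • ρ, x⟫ := by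
    intro x
    have hsymmρ : v.symm ρ = -ρ := by
      have := congrArg v.symm hvρ
      rw [v.symm_apply_apply, map_neg] at this
      exact neg_eq_iff_eq_neg.mp this.symm
    have key : ⟪ρ, v x⟫ = ⟪-ρ, x⟫ := by
      rw [← hsymmρ, ← v.inner_map_map (v.symm ρ) x, v.apply_symm_apply]
    rw [real_inner_smul_left, real_inner_smul_left, key, inner_neg_left]
    ring
  refine ⟨himgQ, ?_, ?_⟩
  · ext β
    simp only [Finset.mem_image, Finset.mem_filter]
    constructor
    · rintro ⟨α, ⟨hαQ, hαpos⟩, rfl⟩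
      exact ⟨hQv α hαQ, by rw [hsign α]; linarith⟩
    · rintro ⟨hβQ, hβneg⟩
      rw [← himgQ] at hβQ
      obtain ⟨α, hαQ, hvα⟩ := Finset.mem_image.1 hβQ
      refine ⟨α, ⟨hαQ, ?_⟩, hvα⟩
      have := hsign α
      rw [hvα] at this
      linarith
  · ext β
    simp only [Finset.mem_image, Finset.mem_filter]
    constructor
    · rintro ⟨α, ⟨hαQ, hαneg⟩, rfl⟩
      exact ⟨hQv α hαQ, by rw [hsign α]; linarith⟩
    · rintro ⟨hβQ, hβpos⟩
      rw [← himgQ] at hβQ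
      obtain ⟨α, hαQ, hvα⟩ := Finset.mem_image.1 hβQ
      refine ⟨α, ⟨hαQ, ?_⟩, hvα⟩
      have := hsign α
      rw [hvα] at this
      linarith
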